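/- For every convex 3-player game v on N = {1,2,3} and every player i in a 2-player coalition A ⊆ N, the τ-value of i in v is at least the τ-value of i in the sub-game v_A. Hence the τ-value encourages the grand coalition in all convex games of up to three players. -/

import Mathlib

/-- The τ-value of player `i`: for an essential game (`T > V`) it is
`((M-T)/(M-V)) v{i} + ((T-V)/(M-V)) m_i`; for an inessential game it is `v {i}`. -/
noncomputable def tauValue {α : Type*} [Fintype α] [DecidableEq α]
    (v : Finset α → ℝ) (i : α) : ℝ :=
  if (∑ j : α, v {j}) < v Finset.univ then
    (((∑ j : α, (v Finset.univ - v (Finset.univ.erase j))) - v Finset.univ) /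
      ((∑ j : α, (v Finset.univ - v (Finset.univ.erase j))) - ∑ j : α, v {j})) * v {i} +
    ((v Finset.univ - ∑ j : α, v {j}) /
      ((∑ j : α, (v Finset.univ - v (Finset.univ.erase j))) - ∑ j : α, v {j})) *
      (v Finset.univ - v (Finset.univ.erase i))
  else v {i}

private lemma keyA (a1 a2 a3 b12 b13 b23 T S M : ℝ)
    (hS : S = a1 + (a2 + a3)) (hM : M = 3*T - b12 - b13 - b23)
    (h1 : a1 + a2 ≤ b12) (h2 : a1 + a3 ≤ b13) (h3 : a2 + a3 ≤ b23)
    (h4 : b12 + a3 ≤ T) (h5 : b13 + a2 ≤ T) (h6 : b23 + a1 ≤ T)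
    (h7 : b12 + b13 ≤ T + a1) (h8 : b12 + b23 ≤ T + a2) (h9 : b13 + b23 ≤ T + a3)
    (hV : S < T) :
    (a1 + b12 - a2) / 2 ≤ ((M - T) / (M - S)) * a1 + ((T - S) / (M - S)) * (T - b23) := by
  subst hS hM
  have hD : (0:ℝ) < (3*T - b12 - b13 - b23) - (a1 + (a2 + a3)) := by linarith
  rw [div_mul_eq_mul_div, div_mul_eq_mul_div, ← add_div,
    div_le_div_iff₀ (by norm_num) hD]
  nlinarith [mul_nonneg (sub_nonneg.2 h6) (sub_nonneg.2 h3),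
    mul_nonneg (sub_nonneg.2 h4) (sub_nonneg.2 h1),
    mul_nonneg (sub_nonneg.2 h5) (sub_nonneg.2 h2),
    sq_nonneg (T - b12 - a3), sq_nonneg (b12 - a1 - a2)]

private lemma keyB (a1 b23 T S M : ℝ) (hma : b23 + a1 ≤ T) (hMT : T ≤ M) (hV : S < T) :
    a1 ≤ ((M - T) / (M - S)) * a1 + ((T - S) / (M - S)) * (T - b23) := by
  have hD : (0:ℝ) < M - S := by linarith
  rw [div_mul_eq_mul_div, div_mul_eq_mul_div, ← add_div, le_div_iff₀ hD]
  nlinarith [mul_le_mul_of_nonneg_left hma (le_of_lt (sub_pos.2 hV))]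

private lemma subgame_tau (v : Finset (Fin 3) → ℝ) (i j : Fin 3) (hij : i ≠ j)
    (hi : i ∈ ({i, j} : Finset (Fin 3))) :
    tauValue (fun S : Finset {x : Fin 3 // x ∈ ({i, j} : Finset (Fin 3))} =>
        v (S.map (Function.Embedding.subtype _))) ⟨i, hi⟩
      = if v {i} + v {j} < v {i, j} then (v {i} + v {i, j} - v {j}) / 2 else v {i} := by
  have hji : j ≠ i := hij.symm
  have hnm : i ∉ ({j} : Finset (Fin 3)) := by simp [hij]
  have huniv : ((Finset.univ : Finset {x : Fin 3 // x ∈ ({i, j} : Finset (Fin 3))}).map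
      (Function.Embedding.subtype _) : Finset (Fin 3)) = ({i, j} : Finset (Fin 3)) := by
    rw [Finset.univ_eq_attach, Finset.attach_map_val]
  have herasei : ({i, j} : Finset (Fin 3)).erase i = {j} := Finset.erase_insert hnm
  have herasej : ({i, j} : Finset (Fin 3)).erase j = {i} := by
    rw [Finset.pair_comm]
    exact Finset.erase_insert (by simp [hji])
  have hmape : ∀ k : {x : Fin 3 // x ∈ ({i, j} : Finset (Fin 3))},
      ((Finset.univ.erase k).map (Function.Embedding.subtype _) : Finset (Fin 3))
        = ({i, j} : Finset (Fin 3)).erase (k : Fin 3) := by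
    intro k
    rw [Finset.map_erase, huniv]
    rfl
  have hmaps : ∀ k : {x : Fin 3 // x ∈ ({i, j} : Finset (Fin 3))},
      (({k} : Finset {x : Fin 3 // x ∈ ({i, j} : Finset (Fin 3))}).map
        (Function.Embedding.subtype _) : Finset (Fin 3)) = {(k : Fin 3)} := by
    intro k
    rw [Finset.map_singleton]
    rfl
  have hsum1 : (∑ k : {x : Fin 3 // x ∈ ({i, j} : Finset (Fin 3))},
      v (({k} : Finset _).map (Function.Embedding.subtype _))) = v {i} + v {j} := by
    rw [Finset.sum_congr rfl (fun k _ => by rw [hmaps k]), Finset.univ_eq_attach,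
      Finset.sum_attach ({i, j} : Finset (Fin 3)) (fun x => v {x}),
      Finset.sum_insert hnm, Finset.sum_singleton]
  have hsum2 : (∑ k : {x : Fin 3 // x ∈ ({i, j} : Finset (Fin 3))},
      (v {i, j} - v ((Finset.univ.erase k).map (Function.Embedding.subtype _))))
      = (v {i, j} - v {j}) + (v {i, j} - v {i}) := by
    rw [Finset.sum_congr rfl (fun k _ => by rw [hmape k]), Finset.univ_eq_attach,
      Finset.sum_attach ({i, j} : Finset (Fin 3))
        (fun x => v {i, j} - v (({i, j} : Finset (Fin 3)).erase x)),
      Finset.sum_insert hnm, Finset.sum_singleton, herasei, herasej]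
  have hmi : ((Finset.univ.erase (⟨i, hi⟩ : {x : Fin 3 // x ∈ ({i, j} : Finset (Fin 3))})).map
      (Function.Embedding.subtype _)) = ({j} : Finset (Fin 3)) := by
    rw [hmape ⟨i, hi⟩, herasei]
  have hsing : (({⟨i, hi⟩} : Finset {x : Fin 3 // x ∈ ({i, j} : Finset (Fin 3))}).map
      (Function.Embedding.subtype _)) = ({i} : Finset (Fin 3)) :=
    hmaps ⟨i, hi⟩
  rw [tauValue]
  simp only [huniv, hsum1, hsum2, hmi, hsing]
  split_ifs with h
  · have hd : (v {i, j} - v {j}) + (v {i, j} - v {i}) - (v {i} + v {j}) ≠ 0 := by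
      intro hc; rw [sub_eq_zero] at hc; nlinarith
    rw [div_mul_eq_mul_div, div_mul_eq_mul_div, ← add_div,
      div_eq_div_iff hd (by norm_num : (2:ℝ) ≠ 0)]
    ring
  · rfl

private lemma master (v : Finset (Fin 3) → ℝ) (h0 : v ∅ = 0)
    (hconv : ∀ A B : Finset (Fin 3), v A + v B ≤ v (A ∪ B) + v (A ∩ B))
    (i j k : Fin 3) (hij : i ≠ j) (hik : i ≠ k) (hjk : j ≠ k) :
    (if v {i} + v {j} < v {i, j} then (v {i} + v {i, j} - v {j}) / 2 else v {i})
      ≤ tauValue v i := by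
  have huniv : ({i, j, k} : Finset (Fin 3)) = Finset.univ := by
    apply Finset.eq_univ_of_card
    rw [Finset.card_insert_of_notMem (by simp [hij, hik]),
      Finset.card_insert_of_notMem (by simp [hjk]), Finset.card_singleton]
    rfl
  -- pair superadditivity
  have pair : ∀ a b : Fin 3, a ≠ b → v {a} + v {b} ≤ v {a, b} := by
    intro a b hab
    have h := hconv {a} {b}
    rw [← Finset.insert_eq, Finset.singleton_inter_of_notMem (by simp [hab]), h0] at h
    linarith
  have trip : ∀ a b c : Fin 3, ({a, b, c} : Finset (Fin 3)) = Finset.univ → c ∉ ({a,b} : Finset (Fin 3)) →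
      v {a, b} + v {c} ≤ v Finset.univ := by
    intro a b c habc hc
    have h := hconv {a, b} {c}
    rw [Finset.union_comm, ← Finset.insert_eq,
      Finset.inter_singleton_of_notMem hc, h0] at h
    have : (insert c {a, b} : Finset (Fin 3)) = Finset.univ := by
      rw [← habc]
      ext x
      simp only [Finset.mem_insert, Finset.mem_singleton]
      tauto
    rw [this] at h
    linarith
  have conv3 : ∀ a b c : Fin 3, a ≠ b → a ≠ c → b ≠ c →
      ({a, b, c} : Finset (Fin 3)) = Finset.univ →
      v {a, b} + v {a, c} ≤ v Finset.univ + v {a} := by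
    intro a b c hab hac hbc habc
    have h := hconv {a, b} {a, c}
    have hu : ({a, b} : Finset (Fin 3)) ∪ {a, c} = Finset.univ := by
      rw [← habc]
      ext x
      simp only [Finset.mem_union, Finset.mem_insert, Finset.mem_singleton]
      tauto
    have hint : ({a, b} : Finset (Fin 3)) ∩ {a, c} = {a} := by
      ext x
      simp only [Finset.mem_inter, Finset.mem_insert, Finset.mem_singleton]
      constructor
      · rintro ⟨h1 | h1, h2 | h2⟩ <;> first | exact h1 | (exfalso; subst h1; subst h2; simp_all) |
          (first | exact absurd rfl hbc | skip) <;> simp_all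
      · intro hx; exact ⟨Or.inl hx, Or.inl hx⟩
    rw [hu, hint] at h
    linarith
  -- membership facts
  have him : i ∉ ({j, k} : Finset (Fin 3)) := by simp [hij, hik]
  have hjm : j ∉ ({i, k} : Finset (Fin 3)) := by simp [hij.symm, hjk]
  have hkm : k ∉ ({i, j} : Finset (Fin 3)) := by simp [hik.symm, hjk.symm]
  have hperm1 : ({i, j, k} : Finset (Fin 3)) = {j, i, k} := Finset.insert_comm i j {k}
  have hperm2 : ({i, j, k} : Finset (Fin 3)) = {k, i, j} := by
    rw [show ({j, k} : Finset (Fin 3)) = {k, j} from Finset.pair_comm j k,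
      Finset.insert_comm i k {j}]
  -- erase facts
  have herasei' : ({i, j, k} : Finset (Fin 3)).erase i = ({j, k} : Finset (Fin 3)) :=
    Finset.erase_insert him
  have herasej' : ({i, j, k} : Finset (Fin 3)).erase j = ({i, k} : Finset (Fin 3)) := by
    rw [hperm1]; exact Finset.erase_insert hjm
  have herasek' : ({i, j, k} : Finset (Fin 3)).erase k = ({i, j} : Finset (Fin 3)) := by
    rw [hperm2]; exact Finset.erase_insert hkm
  have herasei : Finset.univ.erase i = ({j, k} : Finset (Fin 3)) := by
    rw [← huniv]; exact herasei'
  -- sums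
  have hsum1 : (∑ x : Fin 3, v {x}) = v {i} + (v {j} + v {k}) := by
    rw [show (Finset.univ : Finset (Fin 3)) = {i, j, k} from huniv.symm,
      Finset.sum_insert him, Finset.sum_insert (by simp [hjk]), Finset.sum_singleton]
  have hsum2 : (∑ x : Fin 3, (v Finset.univ - v (Finset.univ.erase x)))
      = (v Finset.univ - v {j, k}) + ((v Finset.univ - v {i, k})
        + (v Finset.univ - v {i, j})) := by
    conv_lhs => rw [show (Finset.univ : Finset (Fin 3)) = {i, j, k} from huniv.symm]
    rw [Finset.sum_insert him, Finset.sum_insert (by simp [hjk]), Finset.sum_singleton,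
      herasei', herasej', herasek', huniv]
  -- superadditivity instances
  have p12 : v {i} + v {j} ≤ v {i, j} := pair i j hij
  have p13 : v {i} + v {k} ≤ v {i, k} := pair i k hik
  have p23 : v {j} + v {k} ≤ v {j, k} := pair j k hjk
  have t12 : v {i, j} + v {k} ≤ v Finset.univ := trip i j k huniv hkm
  have t13 : v {i, k} + v {j} ≤ v Finset.univ := by
    refine trip i k j ?_ (by simp [hij.symm, hjk]) 
    rw [← huniv]
    ext x; simp only [Finset.mem_insert, Finset.mem_singleton]; tauto
  have t23 : v {j, k} + v {i} ≤ v Finset.univ := by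
    refine trip j k i ?_ him
    rw [← huniv]
    ext x; simp only [Finset.mem_insert, Finset.mem_singleton]; tauto
  have c1 : v {i, j} + v {i, k} ≤ v Finset.univ + v {i} := conv3 i j k hij hik hjk huniv
  have c2 : v {j, i} + v {j, k} ≤ v Finset.univ + v {j} := by
    refine conv3 j i k hij.symm hjk hik ?_
    rw [← huniv]; ext x; simp only [Finset.mem_insert, Finset.mem_singleton]; tauto
  have c3 : v {k, i} + v {k, j} ≤ v Finset.univ + v {k} := by
    refine conv3 k i j hik.symm hjk.symm hij ?_
    rw [← huniv]; ext x; simp only [Finset.mem_insert, Finset.mem_singleton]; tauto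
  rw [show ({j, i} : Finset (Fin 3)) = {i, j} from Finset.pair_comm j i] at c2
  rw [show ({k, i} : Finset (Fin 3)) = {i, k} from Finset.pair_comm k i,
    show ({k, j} : Finset (Fin 3)) = {j, k} from Finset.pair_comm k j] at c3
  rw [tauValue]
  simp only [hsum1, hsum2, herasei]
  split_ifs with hp hq hq'
  · -- subgame essential, main essential
    refine keyA (v {i}) (v {j}) (v {k}) (v {i, j}) (v {i, k}) (v {j, k})
      (v Finset.univ) _ _ rfl (by ring) p12 p13 p23 t12 t13 t23 c1 c2 c3 hq
  · -- subgame essential forces main essential: contradiction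
    exact absurd (by linarith) hq
  · -- subgame inessential, main essential
    exact keyB (v {i}) (v {j, k}) (v Finset.univ) _ _ t23 (by linarith) hq'
  · exact le_refl _

/-- For a convex 3-player game `v` and a 2-player coalition `A` containing player `i`,
the τ-value of `i` in the sub-game `v_A` is at most the τ-value of `i` in `v`:
the τ-value encourages the grand coalition in convex games of up to three players. -/
theorem tau_encourages_three_player (v : Finset (Fin 3) → ℝ) (h0 : v ∅ = 0)
    (hconv : ∀ A B : Finset (Fin 3), v A + v B ≤ v (A ∪ B) + v (A ∩ B))
    (A : Finset (Fin 3)) (hA : A.card = 2) (i : Fin 3) (hi : i ∈ A) :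
    tauValue (fun S : Finset {x : Fin 3 // x ∈ A} =>
        v (S.map (Function.Embedding.subtype _))) ⟨i, hi⟩
      ≤ tauValue v i := by
  obtain ⟨j, hij, hAeq⟩ : ∃ j : Fin 3, i ≠ j ∧ A = {i, j} := by
    obtain ⟨a, b, hab, hA2⟩ := Finset.card_eq_two.1 hA
    subst hA2
    rcases Finset.mem_insert.1 hi with h | h
    · exact ⟨b, h ▸ hab, by rw [h]⟩
    · rw [Finset.mem_singleton] at h
      exact ⟨a, h ▸ hab.symm, by rw [h, Finset.pair_comm]⟩
  subst hAeq
  rw [subgame_tau v i j hij hi]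
  obtain ⟨k, hik, hjk⟩ : ∃ k : Fin 3, i ≠ k ∧ j ≠ k := by
    revert hij; revert i j; decide
  exact master v h0 hconv i j k hij hik hjk
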